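/- arXiv:1102.2734 — 4 statements merged into one kernel-verified Lean document; each statement's English description precedes it below -/
import Mathlib

section
/- The trelliswidth of an (n,k) MDS code C over a finite field F_q is given by τ(C) = min{k, n − k + 1}. -/
open Module

/-- The submodule of vectors supported on `J` (i.e. zero outside `J`). -/
def supportedOn (F : Type) [Field F] {n : ℕ} (J : Set (Fin n)) : Submodule F (Fin n → F) :=
  Submodule.pi Jᶜ fun _ => ⊥

/-- Dimension of the shortening `C_J` of the code `C` to the coordinates in `J`. -/
noncomputable def shortDim {F : Type} [Field F] {n : ℕ}
    (C : Submodule F (Fin n → F)) (J : Set (Fin n)) : ℕ :=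
  finrank F ↥(C ⊓ supportedOn F J)

/-- Hamming weight of a vector. -/
noncomputable def hWeight {F : Type} [Field F] {n : ℕ} (c : Fin n → F) : ℕ :=
  {i | c i ≠ 0}.ncard

/-- Minimum distance of a linear code. -/
noncomputable def minDist {F : Type} [Field F] {n : ℕ} (C : Submodule F (Fin n → F)) : ℕ :=
  sInf {w : ℕ | ∃ c ∈ C, c ≠ (0 : Fin n → F) ∧ hWeight c = w}

/-- Trelliswidth: the least branch complexity of any trellis realization of `C`,
minimized over all orderings (bijections from positions to coordinates) of `C`. -/
noncomputable def trellisWidth {F : Type} [Field F] {n : ℕ}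
    (C : Submodule F (Fin n → F)) : ℕ :=
  sInf {t : ℕ | ∃ π : Equiv.Perm (Fin n),
    t = Finset.univ.sup fun i : Fin n =>
      finrank F ↥C - shortDim C (⇑π '' {j | j < i}) - shortDim C (⇑π '' {j | i < j})}

section Aux

variable {F : Type} [Field F] {n : ℕ}

lemma mem_supportedOn {J : Set (Fin n)} {v : Fin n → F} :
    v ∈ supportedOn F J ↔ ∀ i, i ∉ J → v i = 0 := by
  simp [supportedOn, Submodule.mem_pi]

/-- Restriction of coordinates to `S`, as a linear map. -/
noncomputable def restr (S : Set (Fin n)) : (Fin n → F) →ₗ[F] (↥S → F) :=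
  LinearMap.funLeft F F Subtype.val

@[simp] lemma restr_apply (S : Set (Fin n)) (v : Fin n → F) (j : ↥S) :
    restr S v j = v j := rfl

noncomputable def suppEquiv (J : Set (Fin n)) : supportedOn F J ≃ₗ[F] (↥J → F) := by
  refine LinearEquiv.ofBijective ((restr J).domRestrict (supportedOn F J)) ⟨?_, ?_⟩
  · intro v w h
    ext i
    by_cases hi : i ∈ J
    · exact congrFun h ⟨i, hi⟩
    · rw [mem_supportedOn.mp v.2 i hi, mem_supportedOn.mp w.2 i hi]
  · classical
    intro f
    refine ⟨⟨fun i => if h : i ∈ J then f ⟨i, h⟩ else 0, ?_⟩, ?_⟩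
    · exact mem_supportedOn.mpr fun i hi => dif_neg hi
    · ext j; exact dif_pos j.2

lemma finrank_supportedOn (J : Set (Fin n)) :
    finrank F (supportedOn F J) = J.ncard := by
  classical
  haveI := Fintype.ofFinite ↥J
  rw [(suppEquiv J).finrank_eq, Module.finrank_pi, ← Nat.card_coe_set_eq,
    Nat.card_eq_fintype_card]

lemma minDist_le {C : Submodule F (Fin n → F)} {c : Fin n → F} (hc : c ∈ C) (h0 : c ≠ 0) :
    minDist C ≤ hWeight c := Nat.sInf_le ⟨c, hc, h0, rfl⟩

lemma shortDim_eq {C : Submodule F (Fin n → F)} {k : ℕ}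
    (hk : finrank F ↥C = k) (hkn : k ≤ n) (hd : n - k + 1 ≤ minDist C) (J : Set (Fin n)) :
    shortDim C J = J.ncard - (n - k) := by
  have hJfin : J.Finite := J.toFinite
  have hJn : J.ncard ≤ n := by
    simpa [Set.ncard_univ] using Set.ncard_le_ncard (Set.subset_univ J) Set.finite_univ
  -- lower bound via dimension counting
  have hlow : finrank F ↥C + finrank F ↥(supportedOn F J)
      = finrank F ↥(C ⊔ supportedOn F J) + finrank F ↥(C ⊓ supportedOn F J) :=
    (Submodule.finrank_sup_add_finrank_inf_eq C (supportedOn F J)).symm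
  have hsupn : finrank F ↥(C ⊔ supportedOn F J) ≤ n := by
    have := Submodule.finrank_le (C ⊔ supportedOn F J)
    simpa [Module.finrank_pi] using this
  -- upper bound: choose `S ⊆ J` of size `min J.ncard (n-k)`
  obtain ⟨S, hSJ, hScard⟩ := Set.exists_subset_card_eq (s := J)
    (n := min J.ncard (n - k)) (min_le_left _ _)
  have hinj : Function.Injective ((restr (J \ S)).domRestrict (C ⊓ supportedOn F J)) := by
    rw [injective_iff_map_eq_zero]
    intro v hv
    have hsupp : {i | v.1 i ≠ 0} ⊆ S := by
      intro i hi
      by_contra hiS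
      by_cases hiJ : i ∈ J
      · exact hi (congrFun hv ⟨i, hiJ, hiS⟩)
      · exact hi (mem_supportedOn.mp v.2.2 i hiJ)
    ext1
    by_contra hv0
    have h1 : minDist C ≤ hWeight v.1 := minDist_le v.2.1 (by simpa using hv0)
    have h2 : hWeight v.1 ≤ S.ncard :=
      Set.ncard_le_ncard hsupp (hJfin.subset hSJ)
    omega
  have hup : finrank F ↥(C ⊓ supportedOn F J) ≤ J.ncard - min J.ncard (n - k) := by
    classical
    haveI := Fintype.ofFinite ↥(J \ S)
    have := LinearMap.finrank_le_finrank_of_injective hinj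
    rwa [Module.finrank_pi, ← Nat.card_eq_fintype_card, Nat.card_coe_set_eq,
      Set.ncard_diff hSJ (hJfin.subset hSJ), hScard] at this
  rw [finrank_supportedOn, hk] at hlow
  show finrank F ↥(C ⊓ supportedOn F J) = J.ncard - (n - k)
  omega

lemma card_lt_set (i : Fin n) : ({j | j < i} : Set (Fin n)).ncard = i.val := by
  classical
  show (Set.Iio i).ncard = i.val
  rw [Set.ncard_eq_toFinset_card', Set.toFinset_Iio, Fin.card_Iio]

lemma card_gt_set (i : Fin n) : ({j | i < j} : Set (Fin n)).ncard = n - 1 - i.val := by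
  classical
  show (Set.Ioi i).ncard = n - 1 - i.val
  rw [Set.ncard_eq_toFinset_card', Set.toFinset_Ioi, Fin.card_Ioi]

end Aux

/-- the trelliswidth of an `(n,k)` MDS code is `min {k, n−k+1}`. -/
theorem stmt4 {F : Type} [Field F] [Fintype F] {n k : ℕ}
    (C : Submodule F (Fin n → F)) (hk : finrank F ↥C = k)
    (hmds : minDist C = n - k + 1) :
    trellisWidth C = min k (n - k + 1) := by
  have hkn : k ≤ n := by
    have := Submodule.finrank_le C
    rw [hk] at this
    simpa [Module.finrank_pi] using this
  have hk1 : 1 ≤ k := by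
    by_contra h
    have hk0 : k = 0 := by omega
    have hC : C = ⊥ := Submodule.finrank_eq_zero.mp (by rw [hk, hk0])
    have : minDist C = 0 := by
      rw [minDist]
      convert Nat.sInf_empty
      rw [Set.eq_empty_iff_forall_notMem]
      rintro w ⟨c, hc, hc0, -⟩
      exact hc0 (by simpa [hC] using hc)
    omega
  have hd : n - k + 1 ≤ minDist C := hmds.ge
  have hsup : ∀ π : Equiv.Perm (Fin n),
      (Finset.univ.sup fun i : Fin n =>
        finrank F ↥C - shortDim C (⇑π '' {j | j < i}) - shortDim C (⇑π '' {j | i < j}))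
      = min k (n - k + 1) := by
    intro π
    have hval : ∀ i : Fin n,
        finrank F ↥C - shortDim C (⇑π '' {j | j < i}) - shortDim C (⇑π '' {j | i < j})
        = k - (i.val - (n - k)) - ((n - 1 - i.val) - (n - k)) := by
      intro i
      rw [hk, shortDim_eq hk hkn hd, shortDim_eq hk hkn hd,
        Set.ncard_image_of_injective _ π.injective,
        Set.ncard_image_of_injective _ π.injective, card_lt_set, card_gt_set]
    apply le_antisymm
    · apply Finset.sup_le
      intro i _
      rw [hval i]
      have := i.isLt
      omega
    · have hi0 : min (k - 1) (n - k) < n := by omega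
      refine le_trans ?_ (Finset.le_sup (f := fun i : Fin n =>
        finrank F ↥C - shortDim C (⇑π '' {j | j < i}) - shortDim C (⇑π '' {j | i < j}))
        (Finset.mem_univ (⟨min (k - 1) (n - k), hi0⟩ : Fin n)))
      beta_reduce
      rw [hval]
      show min k (n - k + 1)
        ≤ k - (min (k-1) (n-k) - (n - k)) - ((n - 1 - min (k-1) (n-k)) - (n - k))
      omega
  rw [trellisWidth]
  apply le_antisymm
  · exact Nat.sInf_le ⟨Equiv.refl _, (hsup _).symm⟩
  · exact le_csInf ⟨_, Equiv.refl _, (hsup _).symm⟩ (by rintro t ⟨π, rfl⟩; exact (hsup π).ge)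
end

section
/- For integers 0 ≤ r ≤ m, let T(r,m) = Σ_{j=0}^{r} C(m−2j−1, r−j) if m ≥ 2r+1 and T(r,m) = 1 + Σ_{j=0}^{m−r−1} C(m−2j−1, r−j) if m < 2r+1 (this is the trelliswidth of RM(r,m)). Then k(r,m) − T(r,m) = Σ_{i=0}^{min{2(r−1), m−1}} k(r−1−⌈i/2⌉, m−1−i), where the sum on the right is empty when r = 0. -/
open Module

/-- `k(r,m) = ∑_{j=0}^{r} C(m,j)`, the dimension of `RM(r,m)`. -/
def kRM (r m : ℕ) : ℕ := ∑ j ∈ Finset.range (r + 1), Nat.choose m j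

/-- The claimed value `τ(r,m)` of the trelliswidth of `RM(r,m)`. -/
def tauRM (r m : ℕ) : ℕ :=
  if 2 * r + 1 ≤ m then ∑ j ∈ Finset.range (r + 1), Nat.choose (m - (2 * j + 1)) (r - j)
  else 1 + ∑ j ∈ Finset.range (m - r), Nat.choose (m - (2 * j + 1)) (r - j)

lemma kRM_zero (m : ℕ) : kRM 0 m = 1 := by simp [kRM]

lemma kRM_succ (a b : ℕ) : kRM (a+1) b = kRM a b + Nat.choose b (a+1) := by
  simp [kRM, Finset.sum_range_succ]

lemma kRM_nil (a : ℕ) : kRM a 0 = 1 := by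
  induction a with
  | zero => simp [kRM]
  | succ a ih => rw [kRM_succ, ih, Nat.choose_eq_zero_of_lt (by omega)]

lemma kRM_one (b : ℕ) : kRM 1 b = b + 1 := by
  simp [kRM, Finset.sum_range_succ]
  omega

lemma kRM_ge1_one (a : ℕ) : kRM (a+1) 1 = 2 := by
  induction a with
  | zero => rw [kRM_one]
  | succ a ih => rw [kRM_succ, ih, Nat.choose_eq_zero_of_lt (by omega)]

lemma kRM_pascal (a b : ℕ) : kRM (a+1) (b+1) = kRM (a+1) b + kRM a b := by
  induction a with
  | zero => rw [kRM_one, kRM_one, kRM_zero]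
  | succ a ih =>
    show kRM (a+2) (b+1) = kRM (a+2) b + kRM (a+1) b
    have h1 : kRM (a+2) (b+1) = kRM (a+1) (b+1) + Nat.choose (b+1) (a+2) :=
      kRM_succ (a+1) (b+1)
    have h2 : kRM (a+2) b = kRM (a+1) b + Nat.choose b (a+2) := kRM_succ (a+1) b
    have h3 := kRM_succ a b
    have h4 : Nat.choose (b+1) (a+2) = Nat.choose b (a+1) + Nat.choose b (a+2) :=
      Nat.choose_succ_succ b (a+1)
    omega

lemma kRM_pair (a b : ℕ) :
    kRM (a+2) (b+2) = (kRM (a+1) (b+1) + kRM a b) + kRM (a+1) b + Nat.choose (b+1) (a+2) := by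
  have h1 : kRM (a+2) (b+2) = kRM (a+2) (b+1) + kRM (a+1) (b+1) :=
    kRM_pascal (a+1) (b+1)
  have h2 : kRM (a+2) (b+1) = kRM (a+1) (b+1) + Nat.choose (b+1) (a+2) :=
    kRM_succ (a+1) (b+1)
  have h3 := kRM_pascal a b
  omega

lemma key (r m : ℕ) : ∀ n : ℕ, n + 1 ≤ r → 2 * n ≤ m →
    ∑ i ∈ Finset.range (2 * n), (kRM (r - 1 - (i + 1) / 2) (m - 1 - i) : ℤ)
      = (kRM r m : ℤ) - (kRM (r - n) (m - 2 * n) : ℤ)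
        - ∑ t ∈ Finset.range n, (Nat.choose (m - (2 * t + 1)) (r - t) : ℤ) := by
  intro n
  induction n with
  | zero => simp
  | succ n ih =>
    intro h1 h2
    obtain ⟨a, ha⟩ : ∃ a, r - n = a + 2 := ⟨r - n - 2, by omega⟩
    obtain ⟨b, hb⟩ : ∃ b, m - 2 * n = b + 2 := ⟨m - 2 * n - 2, by omega⟩
    rw [show 2 * (n + 1) = 2 * n + 1 + 1 by ring, Finset.sum_range_succ, Finset.sum_range_succ,
      ih (by omega) (by omega), Finset.sum_range_succ]
    have e1 : r - 1 - (2 * n + 1) / 2 = a + 1 := by omega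
    have e2 : m - 1 - 2 * n = b + 1 := by omega
    have e3 : r - 1 - (2 * n + 1 + 1) / 2 = a := by omega
    have e4 : m - 1 - (2 * n + 1) = b := by omega
    have e5 : r - (n + 1) = a + 1 := by omega
    have e6 : m - (2 * n + 1 + 1) = b := by omega
    have e7 : m - (2 * n + 1) = b + 1 := by omega
    rw [e1, e2, e3, e4, e5, e6, e7, ha, hb]
    have hp := kRM_pair a b
    omega

/-- `k(r,m) − T(r,m) = ∑_{i=0}^{min{2(r−1), m−1}} k(r−1−⌈i/2⌉, m−1−i)`,
the sum on the right being empty when `r = 0`. -/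
theorem stmt7 (r m : ℕ) (hrm : r ≤ m) :
    (kRM r m : ℤ) - tauRM r m =
      if r = 0 then 0
      else ∑ i ∈ Finset.range (min (2 * (r - 1)) (m - 1) + 1),
        (kRM (r - 1 - (i + 1) / 2) (m - 1 - i) : ℤ) := by
  rcases Nat.eq_zero_or_pos r with hr0 | hrpos
  · subst hr0
    rw [if_pos rfl, kRM_zero, tauRM]
    rcases Nat.eq_zero_or_pos m with hm0 | hm
    · subst hm0
      rw [if_neg (by omega)]
      simp
    · rw [if_pos (by omega)]
      simp
  · rw [if_neg (by omega)]
    by_cases hA : 2 * r - 1 ≤ m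
    · -- case A : m ≥ 2r-1, min = 2(r-1)
      have hmin : min (2 * (r - 1)) (m - 1) = 2 * (r - 1) := by omega
      rw [hmin, Finset.sum_range_succ,
        key r m (r - 1) (by omega) (by omega),
        show r - 1 - (2 * (r - 1) + 1) / 2 = 0 by omega, kRM_zero,
        show r - (r - 1) = 1 by omega, kRM_one]
      by_cases hA1 : 2 * r + 1 ≤ m
      · rw [tauRM, if_pos hA1, show r + 1 = (r - 1) + 1 + 1 by omega,
          Finset.sum_range_succ, Finset.sum_range_succ,
          show m - (2 * (r - 1) + 1) = m - 2 * r + 1 by omega,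
          show r - (r - 1) = 1 by omega, Nat.choose_one_right,
          show m - (2 * ((r - 1) + 1) + 1) = m - 2 * r - 1 by omega,
          show r - ((r - 1) + 1) = 0 by omega, Nat.choose_zero_right]
        push_cast
        omega
      · by_cases hA2 : m = 2 * r
        · rw [tauRM, if_neg (by omega), show m - r = (r - 1) + 1 by omega,
            Finset.sum_range_succ,
            show m - (2 * (r - 1) + 1) = 1 by omega,
            show r - (r - 1) = 1 by omega, Nat.choose_self]
          push_cast
          omega
        · -- m = 2r - 1
          rw [tauRM, if_neg (by omega), show m - r = r - 1 by omega]
          push_cast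
          omega
    · -- case B : m ≤ 2r-2, min = m-1
      have hmin : min (2 * (r - 1)) (m - 1) = m - 1 := by omega
      rw [hmin]
      have hsum : ∀ s : ℕ, m - r ≤ s → s + 1 ≤ r →
          ∑ t ∈ Finset.range s, (Nat.choose (m - (2 * t + 1)) (r - t) : ℤ)
            = ∑ t ∈ Finset.range (m - r), (Nat.choose (m - (2 * t + 1)) (r - t) : ℤ) := by
        intro s hs1 hs2
        rw [← Finset.sum_subset (Finset.range_subset_range.2 hs1)]
        intro x hx hnx
        simp only [Finset.mem_range] at hx hnx
        rw [Nat.choose_eq_zero_of_lt (by omega)]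
        simp
      obtain ⟨s, hs⟩ | ⟨s, hs⟩ := Nat.even_or_odd m
      · -- m = 2s
        rw [show Finset.range (m - 1 + 1) = Finset.range (2 * s) by congr 1; omega,
          key r m s (by omega) (by omega),
          show m - 2 * s = 0 by omega, kRM_nil,
          hsum s (by omega) (by omega), tauRM, if_neg (by omega)]
        push_cast
        omega
      · -- m = 2s + 1
        rw [show Finset.range (m - 1 + 1) = Finset.range (2 * s + 1) by congr 1; omega,
          Finset.sum_range_succ,
          key r m s (by omega) (by omega),
          show m - 1 - 2 * s = 0 by omega, kRM_nil,
          show m - 2 * s = 1 by omega,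
          show r - s = (r - s - 1) + 1 by omega, kRM_ge1_one,
          hsum s (by omega) (by omega), tauRM, if_neg (by omega)]
        push_cast
        omega
end

section
/- Let m ≥ 3, n = 2^m, and let T be a cubic tree with n leaves. Let W = {v : v an internal node of T with n/2 ≤ n_{e_3(v),v} ≤ 2n/3}; then W is nonempty. Let v* be an element of W for which n_{e_3(v),v} is maximum over v ∈ W. Then n/6 < n_{e_2(v*),v*} < n/3. -/
open Module

/-- Degree of a vertex (the number of its neighbours). -/
noncomputable def deg {V : Type} (T : SimpleGraph V) (v : V) : ℕ :=
  (T.neighborSet v).ncard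

/-- The set of leaves (degree-1 vertices) of a graph. -/
def leaves {V : Type} (T : SimpleGraph V) : Set V :=
  {v | deg T v = 1}

/-- A cubic tree: every node is a leaf (degree 1) or internal of degree 3. -/
def IsCubic {V : Type} (T : SimpleGraph V) : Prop :=
  ∀ v, deg T v = 1 ∨ deg T v = 3

/-- `compAway T v u` : the vertex set of the component of `T` minus the edge `{v,u}`
containing `u` (hence not containing `v`); this is `T_{e,v}` for `e = {u,v}`. -/
def compAway {V : Type} (T : SimpleGraph V) (v u : V) : Set V :=
  {w | (T.deleteEdges {s(v, u)}).Reachable u w}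

/-- `nAway T v u` : the number of leaves of `T` lying in the component of `T - {v,u}`
not containing `v`; this is `n_{e,v}` for `e = {u,v}`. -/
noncomputable def nAway {V : Type} (T : SimpleGraph V) (v u : V) : ℕ :=
  (compAway T v u ∩ leaves T).ncard

/-- Neighbours of a vertex, as a `Finset`. -/
noncomputable def nbrFinset {V : Type} [Fintype V] (T : SimpleGraph V) (v : V) : Finset V :=
  (T.neighborSet v).toFinite.toFinset

/-- `n_{e_3(v),v}`: the largest number of leaves in a component of `T - e` over the
edges `e` incident to `v`. -/
noncomputable def n3max {V : Type} (T : SimpleGraph V) (v : V) : ℕ :=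
  sSup ((fun u => nAway T v u) '' T.neighborSet v)

/-- `n_{e_1(v),v}`: the smallest number of leaves in a component of `T - e` over the
edges `e` incident to `v`. -/
noncomputable def n1min {V : Type} (T : SimpleGraph V) (v : V) : ℕ :=
  sInf ((fun u => nAway T v u) '' T.neighborSet v)

/-- `n_{e_2(v),v}`: the middle of the three leaf counts at an internal node `v` of a
cubic tree (the total of the three leaf counts minus the largest and the smallest). -/
noncomputable def n2mid {V : Type} [Fintype V] (T : SimpleGraph V) (v : V) : ℕ :=
  (∑ u ∈ nbrFinset T v, nAway T v u) - n3max T v - n1min T v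


namespace Stmt9Aux

open SimpleGraph

variable {V : Type} {T : SimpleGraph V}

lemma self_mem_compAway (T : SimpleGraph V) (v u : V) : u ∈ compAway T v u :=
  Reachable.refl u

lemma not_reachable_delete (hT : T.IsTree) {v u : V} (h : T.Adj v u) :
    ¬ (T.deleteEdges {s(v, u)}).Reachable v u := by
  have hb := (isAcyclic_iff_forall_adj_isBridge.mp hT.IsAcyclic) h
  rw [isBridge_iff] at hb
  exact hb

lemma mem_compAway_of_adj {v u x y : V} (hx : x ∈ compAway T v u) (hxy : T.Adj x y)
    (hne : s(x, y) ≠ s(v, u)) : y ∈ compAway T v u := by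
  refine Reachable.trans hx (Adj.reachable ?_)
  rw [deleteEdges_adj]
  exact ⟨hxy, by simpa using hne⟩

lemma mem_compAway_of_walk {v u x y : V} (hx : x ∈ compAway T v u)
    (p : T.Walk x y) (hp : s(v, u) ∉ p.edges) : y ∈ compAway T v u := by
  induction p with
  | nil => exact hx
  | @cons x a y h q ih =>
    refine ih (mem_compAway_of_adj hx h ?_) (fun hm => hp (List.mem_cons_of_mem _ hm))
    intro he
    exact hp (by rw [← he]; simp)

lemma not_mem_compAway (hT : T.IsTree) {v u : V} (h : T.Adj v u) :
    v ∉ compAway T v u :=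
  fun hv => not_reachable_delete hT h hv.symm

lemma exists_walk_avoid (hT : T.IsTree) {v u w : V} (h : T.Adj v u)
    (hw : w ∈ compAway T v u) : ∃ p : T.Walk u w, v ∉ p.support := by
  classical
  obtain ⟨q⟩ := hw
  by_cases hv : v ∈ q.support
  · exact absurd (Reachable.symm ⟨q.takeUntil v hv⟩) (not_reachable_delete hT h)
  · refine ⟨q.transfer T (fun e he => ?_), by rwa [Walk.support_transfer]⟩
    exact edgeSet_mono (deleteEdges_le _) (q.edges_subset_edgeSet he)

lemma edge_not_mem_of_avoid {x y v u : V} (p : T.Walk x y) (hv : v ∉ p.support) :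
    s(v, u) ∉ p.edges :=
  fun he => hv (p.fst_mem_support_of_mem_edges he)

lemma compAway_cover (hT : T.IsTree) {v u : V} (h : T.Adj v u) (w : V) :
    w ∈ compAway T v u ∨ w ∈ compAway T u v := by
  obtain ⟨p⟩ := hT.isConnected.preconnected u w
  have key : ∀ (x y : V) (q : T.Walk x y),
      (x ∈ compAway T v u ∨ x ∈ compAway T u v) →
      (y ∈ compAway T v u ∨ y ∈ compAway T u v) := by
    intro x y q
    induction q with
    | nil => exact id
    | @cons x a y hadj q ih =>
      intro hx
      apply ih
      by_cases he : s(x, a) = s(v, u)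
      · rcases Sym2.eq_iff.mp he with ⟨hxv, hau⟩ | ⟨hxu, hav⟩
        · exact Or.inl (hau ▸ self_mem_compAway T v u)
        · exact Or.inr (hav ▸ self_mem_compAway T u v)
      · rcases hx with hx | hx
        · exact Or.inl (mem_compAway_of_adj hx hadj he)
        · refine Or.inr (mem_compAway_of_adj hx hadj ?_)
          rw [Sym2.eq_swap (a := u)]
          exact he
  exact key u w p (Or.inl (self_mem_compAway T v u))

lemma compAway_disj (hT : T.IsTree) {v u w : V} (h : T.Adj v u)
    (h1 : w ∈ compAway T v u) (h2 : w ∈ compAway T u v) : False := by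
  have h2' : (T.deleteEdges {s(v, u)}).Reachable v w := by
    rw [Sym2.eq_swap]
    exact h2
  exact not_reachable_delete hT h (h2'.trans h1.symm)


/-- Distinct branches at a vertex are disjoint. -/
lemma compAway_disj_at (hT : T.IsTree) {v u1 u2 w : V} (h1 : T.Adj v u1) (h2 : T.Adj v u2)
    (hne : u1 ≠ u2) (hw1 : w ∈ compAway T v u1) (hw2 : w ∈ compAway T v u2) : False := by
  obtain ⟨p, hp⟩ := exists_walk_avoid hT h2 hw2
  have hu2 : u2 ∈ compAway T u1 v := by
    refine mem_compAway_of_adj (self_mem_compAway T u1 v) h2 ?_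
    intro he
    rcases Sym2.eq_iff.mp he with ⟨ha, hb⟩ | ⟨ha, hb⟩
    · exact h1.ne ha
    · exact hne hb.symm
  have hw : w ∈ compAway T u1 v :=
    mem_compAway_of_walk hu2 p (fun he => hp (p.snd_mem_support_of_mem_edges he))
  exact compAway_disj hT h1 hw1 hw

/-- The branch from `u` through `x ≠ v` is inside the branch from `v` through `u`. -/
lemma compAway_subset (hT : T.IsTree) {v u x : V} (hvu : T.Adj v u) (hux : T.Adj u x)
    (hxv : x ≠ v) : compAway T u x ⊆ compAway T v u := by
  intro w hw
  obtain ⟨p, hp⟩ := exists_walk_avoid hT hux hw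
  have hx : x ∈ compAway T v u := by
    refine mem_compAway_of_adj (self_mem_compAway T v u) hux ?_
    intro he
    rcases Sym2.eq_iff.mp he with ⟨ha, hb⟩ | ⟨ha, hb⟩
    · exact hvu.ne ha.symm
    · exact hxv hb
  have : s(v, u) ∉ p.edges := by
    intro he
    rw [Sym2.eq_swap] at he
    exact hp (p.fst_mem_support_of_mem_edges he)
  exact mem_compAway_of_walk hx p this

lemma exists_leaf [Fintype V] (hT : T.IsTree) (hcubic : IsCubic T) :
    ∀ (v u : V), T.Adj v u → ∃ w ∈ compAway T v u, deg T w = 1 := by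
  classical
  have key : ∀ (N : ℕ) (v u : V), (compAway T v u).ncard ≤ N → T.Adj v u →
      ∃ w ∈ compAway T v u, deg T w = 1 := by
    intro N
    induction N with
    | zero =>
      intro v u hle _
      exact absurd hle (by
        have : 0 < (compAway T v u).ncard :=
          (Set.ncard_pos (Set.toFinite _)).mpr ⟨u, self_mem_compAway T v u⟩
        omega)
    | succ N ih =>
      intro v u hle hvu
      rcases hcubic u with hu | hu
      · exact ⟨u, self_mem_compAway T v u, hu⟩
      · have hsub0 : ¬ (T.neighborSet u ⊆ {v}) := by
          intro hsub
          have := Set.ncard_le_ncard hsub (Set.finite_singleton v)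
          rw [Set.ncard_singleton] at this
          rw [deg] at hu
          omega
        obtain ⟨x, hx, hxv⟩ : ∃ x ∈ T.neighborSet u, x ≠ v := by
          by_contra hc
          push_neg at hc
          exact hsub0 (fun x hx => hc x hx)
        have hux : T.Adj u x := hx
        have hsub := compAway_subset hT hvu hux hxv
        have hlt : (compAway T u x).ncard < (compAway T v u).ncard := by
          refine Set.ncard_lt_ncard ⟨hsub, fun hs => ?_⟩ (Set.toFinite _)
          exact not_mem_compAway hT hux (hs (self_mem_compAway T v u))
        obtain ⟨w, hw, hwleaf⟩ := ih u x (by omega) hux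
        exact ⟨w, hsub hw, hwleaf⟩
  intro v u hvu
  exact key (compAway T v u).ncard v u le_rfl hvu

/-- Any vertex other than `v` lies in some branch at `v`. -/
lemma exists_branch (hT : T.IsTree) {v w : V} (hw : w ≠ v) :
    ∃ u ∈ T.neighborSet v, w ∈ compAway T v u := by
  have key : ∀ (x y : V) (q : T.Walk x y),
      x = y ∨ ∃ u ∈ T.neighborSet y, x ∈ compAway T y u := by
    intro x y q
    induction q with
    | nil => exact Or.inl rfl
    | @cons x a y hadj q ih =>
      rcases ih with rfl | ⟨u, hu, ha⟩
      · exact Or.inr ⟨x, hadj.symm, self_mem_compAway T a x⟩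
      · by_cases hxy : x = y
        · exact Or.inl hxy
        · refine Or.inr ⟨u, hu, mem_compAway_of_adj ha hadj.symm ?_⟩
          intro he
          rcases Sym2.eq_iff.mp he with ⟨ha', hb'⟩ | ⟨ha', hb'⟩
          · exact not_mem_compAway hT hu (ha' ▸ ha)
          · exact hxy hb'
  obtain ⟨p⟩ := hT.isConnected.preconnected w v
  rcases key w v p with rfl | h
  · exact absurd rfl hw
  · exact h


variable [Fintype V]

lemma le_n3max {v u : V} (hu : u ∈ T.neighborSet v) : nAway T v u ≤ n3max T v :=
  le_csSup ((Set.toFinite (T.neighborSet v)).image _).bddAbove ⟨u, hu, rfl⟩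

lemma n3max_le {v : V} (hne : (T.neighborSet v).Nonempty) {M : ℕ}
    (h : ∀ u ∈ T.neighborSet v, nAway T v u ≤ M) : n3max T v ≤ M := by
  apply csSup_le (hne.image _)
  rintro b ⟨u, hu, rfl⟩
  exact h u hu

lemma n1min_le {v u : V} (hu : u ∈ T.neighborSet v) : n1min T v ≤ nAway T v u :=
  Nat.sInf_le ⟨u, hu, rfl⟩

lemma le_n1min {v : V} (hne : (T.neighborSet v).Nonempty) {M : ℕ}
    (h : ∀ u ∈ T.neighborSet v, M ≤ nAway T v u) : M ≤ n1min T v := by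
  apply le_csInf (hne.image _)
  rintro b ⟨u, hu, rfl⟩
  exact h u hu

/-- Sorted neighbours of an internal node. -/
lemma sorted_nbrs (hdeg : deg T v = 3) :
    ∃ u1 u2 u3 : V, u1 ≠ u2 ∧ u1 ≠ u3 ∧ u2 ≠ u3 ∧ T.neighborSet v = {u1, u2, u3} ∧
      nAway T v u1 ≤ nAway T v u2 ∧ nAway T v u2 ≤ nAway T v u3 := by
  obtain ⟨x, y, z, hxy, hxz, hyz, hN⟩ := Set.ncard_eq_three.mp hdeg
  have perm : ∀ a b c : V, ({a, b, c} : Set V) = {x, y, z} →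
      a ≠ b → a ≠ c → b ≠ c →
      nAway T v a ≤ nAway T v b → nAway T v b ≤ nAway T v c →
      ∃ u1 u2 u3 : V, u1 ≠ u2 ∧ u1 ≠ u3 ∧ u2 ≠ u3 ∧ T.neighborSet v = {u1, u2, u3} ∧
        nAway T v u1 ≤ nAway T v u2 ∧ nAway T v u2 ≤ nAway T v u3 := by
    intro a b c hset hab hac hbc h1 h2
    exact ⟨a, b, c, hab, hac, hbc, by rw [hN, hset], h1, h2⟩
  rcases le_total (nAway T v x) (nAway T v y) with h1 | h1 <;>
    rcases le_total (nAway T v y) (nAway T v z) with h2 | h2 <;>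
    rcases le_total (nAway T v x) (nAway T v z) with h3 | h3
  · exact perm x y z rfl hxy hxz hyz h1 h2
  · exact perm x y z rfl hxy hxz hyz h1 h2
  · exact perm x z y (by ext w; simp; tauto) hxz hxy hyz.symm h3 h2
  · exact perm z x y (by ext w; simp; tauto) hxz.symm hyz.symm hxy h3 h1
  · exact perm y x z (by ext w; simp; tauto) hxy.symm hyz hxz h1 h3
  · exact perm y z x (by ext w; simp; tauto) hyz hxy.symm hxz.symm h2 h3
  · exact perm z y x (by ext w; simp; tauto) hyz.symm hxz.symm hxy.symm h2 h1
  · exact perm z y x (by ext w; simp; tauto) hyz.symm hxz.symm hxy.symm h2 h1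

lemma nbrSum_eq {v u1 u2 u3 : V} (hN : T.neighborSet v = {u1, u2, u3})
    (h12 : u1 ≠ u2) (h13 : u1 ≠ u3) (h23 : u2 ≠ u3) :
    ∑ u ∈ nbrFinset T v, nAway T v u = nAway T v u1 + nAway T v u2 + nAway T v u3 := by
  classical
  have hfin : nbrFinset T v = {u1, u2, u3} := by
    ext w
    rw [nbrFinset, Set.Finite.mem_toFinset, hN]
    simp
  rw [hfin]
  rw [Finset.sum_insert (by simp [h12, h13]), Finset.sum_insert (by simp [h23]),
    Finset.sum_singleton]
  ring

lemma n3max_eq {v u1 u2 u3 : V} (hN : T.neighborSet v = {u1, u2, u3})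
    (h1 : nAway T v u1 ≤ nAway T v u3) (h2 : nAway T v u2 ≤ nAway T v u3) :
    n3max T v = nAway T v u3 := by
  apply le_antisymm
  · apply n3max_le (by rw [hN]; exact ⟨u1, by simp⟩)
    intro u hu
    rw [hN] at hu
    simp only [Set.mem_insert_iff, Set.mem_singleton_iff] at hu
    rcases hu with rfl | rfl | rfl <;> [exact h1; exact h2; exact le_rfl]
  · exact le_n3max (by rw [hN]; simp)

lemma n1min_eq {v u1 u2 u3 : V} (hN : T.neighborSet v = {u1, u2, u3})
    (h1 : nAway T v u1 ≤ nAway T v u2) (h2 : nAway T v u1 ≤ nAway T v u3) :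
    n1min T v = nAway T v u1 := by
  apply le_antisymm
  · exact n1min_le (by rw [hN]; simp)
  · apply le_n1min (by rw [hN]; exact ⟨u1, by simp⟩)
    intro u hu
    rw [hN] at hu
    simp only [Set.mem_insert_iff, Set.mem_singleton_iff] at hu
    rcases hu with rfl | rfl | rfl <;> [exact le_rfl; exact h1; exact h2]

lemma n2mid_eq {v u1 u2 u3 : V} (hN : T.neighborSet v = {u1, u2, u3})
    (h12 : u1 ≠ u2) (h13 : u1 ≠ u3) (h23 : u2 ≠ u3)
    (ha : nAway T v u1 ≤ nAway T v u2) (hb : nAway T v u2 ≤ nAway T v u3) :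
    n2mid T v = nAway T v u2 := by
  rw [n2mid, nbrSum_eq hN h12 h13 h23, n3max_eq hN (ha.trans hb) hb,
    n1min_eq hN ha (ha.trans hb)]
  omega


section Counting
variable [Fintype V]

/-- Leaf counts on the two sides of an edge add up to the total number of leaves. -/
lemma pair_sum (hT : T.IsTree) {v u : V} (h : T.Adj v u) :
    nAway T v u + nAway T u v = (leaves T).ncard := by
  rw [nAway, nAway, ← Set.ncard_union_eq ?_ (Set.toFinite _) (Set.toFinite _)]
  · congr 1
    ext w
    simp only [Set.mem_union, Set.mem_inter_iff]
    constructor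
    · rintro (⟨_, hw⟩ | ⟨_, hw⟩) <;> exact hw
    · intro hw
      rcases compAway_cover hT h w with hc | hc
      · exact Or.inl ⟨hc, hw⟩
      · exact Or.inr ⟨hc, hw⟩
  · rw [Set.disjoint_left]
    rintro w ⟨hw1, _⟩ ⟨hw2, _⟩
    exact compAway_disj hT h hw1 hw2

lemma nAway_pos (hT : T.IsTree) (hcubic : IsCubic T) {v u : V} (h : T.Adj v u) :
    1 ≤ nAway T v u := by
  obtain ⟨w, hw, hwl⟩ := exists_leaf hT hcubic v u h
  have : (compAway T v u ∩ leaves T).Nonempty := ⟨w, hw, hwl⟩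
  have := (Set.ncard_pos (Set.toFinite _)).mpr this
  rw [nAway]
  omega

lemma nAway_leaf (hT : T.IsTree) {v u : V} (h : T.Adj v u) (hu : deg T u = 1) :
    nAway T v u = 1 := by
  have hcomp : compAway T v u = {u} := by
    apply Set.eq_singleton_iff_unique_mem.mpr
    refine ⟨self_mem_compAway T v u, fun w hw => ?_⟩
    obtain ⟨p⟩ := hw
    cases p with
    | nil => rfl
    | cons h' q =>
      exfalso
      rw [deleteEdges_adj] at h'
      obtain ⟨hadj, hne⟩ := h'
      have hN : T.neighborSet u = {v} := by
        obtain ⟨a, ha⟩ := Set.ncard_eq_one.mp hu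
        rw [ha]
        have : v ∈ T.neighborSet u := h.symm
        rw [ha] at this
        rw [Set.mem_singleton_iff] at this
        rw [this]
      have : _ ∈ T.neighborSet u := hadj
      rw [hN, Set.mem_singleton_iff] at this
      subst this
      rw [Sym2.eq_swap] at hne
      simp at hne
  rw [nAway, hcomp]
  have : ({u} : Set V) ∩ leaves T = {u} := by
    rw [Set.inter_eq_left]
    simpa [leaves] using hu
  rw [this, Set.ncard_singleton]

lemma nAway_big_internal (hT : T.IsTree) (hcubic : IsCubic T) {v u : V} (h : T.Adj v u)
    (h2 : 2 ≤ nAway T v u) : deg T u = 3 := by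
  rcases hcubic u with hu | hu
  · rw [nAway_leaf hT h hu] at h2; omega
  · exact hu

/-- Splitting the neighbour set at a given neighbour. -/
lemma nbr_split (hdeg : deg T v = 3) {a : V} (ha : a ∈ T.neighborSet v) :
    ∃ c d : V, a ≠ c ∧ a ≠ d ∧ c ≠ d ∧ T.neighborSet v = {a, c, d} := by
  obtain ⟨x, y, z, hxy, hxz, hyz, hN⟩ := Set.ncard_eq_three.mp hdeg
  rw [hN] at ha
  simp only [Set.mem_insert_iff, Set.mem_singleton_iff] at ha
  rcases ha with rfl | rfl | rfl
  · exact ⟨y, z, hxy, hxz, hyz, hN⟩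
  · exact ⟨x, z, hxy.symm, hyz, hxz, by rw [hN]; ext w; simp; tauto⟩
  · exact ⟨x, y, hxz.symm, hyz.symm, hxy, by rw [hN]; ext w; simp; tauto⟩

/-- The three branches at an internal node of the cubic tree partition the leaves. -/
lemma triple_sum (hT : T.IsTree) {v u1 u2 u3 : V} (hdeg : deg T v = 3)
    (hN : T.neighborSet v = {u1, u2, u3}) (h12 : u1 ≠ u2) (h13 : u1 ≠ u3) (h23 : u2 ≠ u3) :
    nAway T v u1 + nAway T v u2 + nAway T v u3 = (leaves T).ncard := by
  have hm1 : u1 ∈ T.neighborSet v := by rw [hN]; simp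
  have hm2 : u2 ∈ T.neighborSet v := by rw [hN]; simp
  have hm3 : u3 ∈ T.neighborSet v := by rw [hN]; simp
  have ha1 : T.Adj v u1 := hm1
  have ha2 : T.Adj v u2 := hm2
  have ha3 : T.Adj v u3 := hm3
  have hdisj : ∀ (a b : V), T.Adj v a → T.Adj v b → a ≠ b →
      Disjoint (compAway T v a ∩ leaves T) (compAway T v b ∩ leaves T) := by
    intro a b haa hbb hab
    rw [Set.disjoint_left]
    rintro w ⟨hw1, _⟩ ⟨hw2, _⟩
    exact compAway_disj_at hT haa hbb hab hw1 hw2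
  rw [nAway, nAway, nAway]
  rw [← Set.ncard_union_eq (hdisj u1 u2 ha1 ha2 h12) (Set.toFinite _) (Set.toFinite _)]
  rw [← Set.ncard_union_eq ?_ (Set.toFinite _) (Set.toFinite _)]
  · congr 1
    ext w
    simp only [Set.mem_union, Set.mem_inter_iff]
    constructor
    · rintro ((⟨_, hw⟩ | ⟨_, hw⟩) | ⟨_, hw⟩) <;> exact hw
    · intro hw
      have hwv : w ≠ v := by
        intro he
        have : deg T w = 1 := hw
        rw [he, hdeg] at this
        omega
      obtain ⟨u, hu, hcu⟩ := exists_branch hT hwv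
      rw [hN] at hu
      simp only [Set.mem_insert_iff, Set.mem_singleton_iff] at hu
      rcases hu with rfl | rfl | rfl
      · exact Or.inl (Or.inl ⟨hcu, hw⟩)
      · exact Or.inl (Or.inr ⟨hcu, hw⟩)
      · exact Or.inr ⟨hcu, hw⟩
  · rw [Set.disjoint_left]
    rintro w (⟨hw1, _⟩ | ⟨hw1, _⟩) ⟨hw2, _⟩
    · exact compAway_disj_at hT ha1 ha3 h13 hw1 hw2
    · exact compAway_disj_at hT ha2 ha3 h23 hw1 hw2

end Counting


/-- If `v` has a neighbour `b` whose branch holds at least half of the leaves, then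
`n3max` at `v` is attained at `b`. -/
lemma n3max_eq_of_heavy (hT : T.IsTree) (hcubic : IsCubic T) {a b : V} (hab : T.Adj a b)
    (hdeg : deg T a = 3) (hbig : (leaves T).ncard ≤ 2 * nAway T a b) :
    n3max T a = nAway T a b := by
  have hbN : b ∈ T.neighborSet a := hab
  obtain ⟨c, d, hbc, hbd, hcd, hN⟩ := nbr_split hdeg hbN
  have hcN : c ∈ T.neighborSet a := by rw [hN]; simp
  have hdN : d ∈ T.neighborSet a := by rw [hN]; simp
  have htriple := triple_sum hT hdeg hN hbc hbd hcd
  have hc1 := nAway_pos hT hcubic (show T.Adj a c from hcN)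
  have hd1 := nAway_pos hT hcubic (show T.Adj a d from hdN)
  apply le_antisymm ?_ (le_n3max hbN)
  apply n3max_le ⟨b, hbN⟩
  intro u hu
  rw [hN] at hu
  simp only [Set.mem_insert_iff, Set.mem_singleton_iff] at hu
  rcases hu with rfl | rfl | rfl
  · exact le_rfl
  · omega
  · omega

theorem stmt9_main {V : Type} [Fintype V] (T : SimpleGraph V) (m : ℕ) (hm : 3 ≤ m)
    (hT : T.IsTree) (hcubic : IsCubic T) (hleaves : (leaves T).ncard = 2 ^ m) :
    {v : V | deg T v = 3 ∧ 2 ^ m ≤ 2 * n3max T v ∧ 3 * n3max T v ≤ 2 * 2 ^ m}.Nonempty ∧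
    ∀ v : V,
      (deg T v = 3 ∧ 2 ^ m ≤ 2 * n3max T v ∧ 3 * n3max T v ≤ 2 * 2 ^ m) →
      (∀ w : V, (deg T w = 3 ∧ 2 ^ m ≤ 2 * n3max T w ∧ 3 * n3max T w ≤ 2 * 2 ^ m) →
        n3max T w ≤ n3max T v) →
      2 ^ m < 6 * n2mid T v ∧ 3 * n2mid T v < 2 ^ m := by
  classical
  set n := 2 ^ m with hndef
  have hn8 : 8 ≤ n := by
    calc (8 : ℕ) = 2 ^ 3 := by norm_num
    _ ≤ 2 ^ m := Nat.pow_le_pow_right (by norm_num) hm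
  have hd1 : ¬ (3 ∣ n) := by
    intro h
    rw [hndef] at h
    have := Nat.Prime.dvd_of_dvd_pow Nat.prime_three h
    omega
  have hd2 : ¬ (3 ∣ 2 * n) := by
    intro h
    rcases (Nat.Prime.dvd_mul Nat.prime_three).mp h with h | h
    · omega
    · exact hd1 h
  constructor
  · -- W nonempty
    -- there is an edge
    obtain ⟨w₀, hw₀⟩ : (leaves T).Nonempty := by
      apply Set.nonempty_of_ncard_ne_zero
      omega
    have hw₀d : deg T w₀ = 1 := hw₀
    obtain ⟨b₀, hb₀⟩ : (T.neighborSet w₀).Nonempty := by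
      apply Set.nonempty_of_ncard_ne_zero
      rw [show (T.neighborSet w₀).ncard = deg T w₀ from rfl, hw₀d]
      omega
    have hedge : T.Adj w₀ b₀ := hb₀
    set K : Set ℕ := {k : ℕ | ∃ a b : V, T.Adj a b ∧ nAway T a b = k ∧ n ≤ 2 * k} with hK
    have hKne : K.Nonempty := by
      have hp := pair_sum hT hedge
      rw [hleaves] at hp
      rcases le_or_gt n (2 * nAway T w₀ b₀) with h | h
      · exact ⟨nAway T w₀ b₀, w₀, b₀, hedge, rfl, h⟩
      · exact ⟨nAway T b₀ w₀, b₀, w₀, hedge.symm, rfl, by omega⟩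
    obtain ⟨a, b, hab, hk, hbig⟩ := Nat.sInf_mem hKne
    set k := sInf K with hkdef
    have hmin : ∀ k' ∈ K, k ≤ k' := fun _ h => Nat.sInf_le h
    -- b is internal
    have hdegb : deg T b = 3 := nAway_big_internal hT hcubic hab (by omega)
    obtain ⟨c, d, hac, had, hcd, hNb⟩ := nbr_split hdegb (show a ∈ T.neighborSet b from hab.symm)
    have hbc : T.Adj b c := by rw [← SimpleGraph.mem_neighborSet, hNb]; simp
    have hbd : T.Adj b d := by rw [← SimpleGraph.mem_neighborSet, hNb]; simp
    have htriple := triple_sum hT hdegb hNb hac had hcd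
    have hpab := pair_sum hT hab
    have hpbc := pair_sum hT hbc
    have hpbd := pair_sum hT hbd
    rw [hleaves] at htriple hpab hpbc hpbd
    have hposc := nAway_pos hT hcubic hbc
    have hposd := nAway_pos hT hcubic hbd
    have hc_le : nAway T b c ≤ n - k := by
      rcases le_or_gt n (2 * nAway T b c) with h | h
      · have := hmin _ ⟨b, c, hbc, rfl, h⟩
        omega
      · have := hmin _ ⟨c, b, hbc.symm, rfl, by omega⟩
        omega
    have hd_le : nAway T b d ≤ n - k := by
      rcases le_or_gt n (2 * nAway T b d) with h | h
      · have := hmin _ ⟨b, d, hbd, rfl, h⟩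
        omega
      · have := hmin _ ⟨d, b, hbd.symm, rfl, by omega⟩
        omega
    have h3k : 3 * k ≤ 2 * n := by omega
    have hdega : deg T a = 3 := by
      rcases hcubic a with ha | ha
      · have := nAway_leaf hT hab.symm ha
        omega
      · exact ha
    have h3a : n3max T a = k := by
      rw [n3max_eq_of_heavy hT hcubic hab hdega (by omega), hk]
    exact ⟨a, hdega, by omega, by omega⟩
  · -- maximal element of W
    rintro v ⟨hdeg, h2, h3⟩ hmax
    obtain ⟨u1, u2, u3, h12, h13, h23, hN, hle12, hle23⟩ := sorted_nbrs hdeg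
    have hm1 : u1 ∈ T.neighborSet v := by rw [hN]; simp
    have hm2 : u2 ∈ T.neighborSet v := by rw [hN]; simp
    have hm3 : u3 ∈ T.neighborSet v := by rw [hN]; simp
    have htriple := triple_sum hT hdeg hN h12 h13 h23
    rw [hleaves] at htriple
    have hpos1 := nAway_pos hT hcubic (show T.Adj v u1 from hm1)
    have hpos2 := nAway_pos hT hcubic (show T.Adj v u2 from hm2)
    have h3eq : n3max T v = nAway T v u3 := n3max_eq hN (hle12.trans hle23) hle23
    have h2eq : n2mid T v = nAway T v u2 := n2mid_eq hN h12 h13 h23 hle12 hle23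
    rw [h3eq] at h2 h3
    rw [h2eq]
    have hne3 : 3 * nAway T v u3 ≠ 2 * n := by
      intro h
      exact hd2 ⟨nAway T v u3, by omega⟩
    constructor
    · omega
    · -- upper bound
      by_contra hcon
      push_neg at hcon
      have hdegu2 : deg T u2 = 3 :=
        nAway_big_internal hT hcubic (show T.Adj v u2 from hm2) (by omega)
      have hpair2 := pair_sum hT (show T.Adj v u2 from hm2)
      rw [hleaves] at hpair2
      have hheavy : n3max T u2 = nAway T u2 v := by
        apply n3max_eq_of_heavy hT hcubic (show T.Adj u2 v from (hm2 : T.Adj v u2).symm) hdegu2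
        omega
      have hW : deg T u2 = 3 ∧ n ≤ 2 * n3max T u2 ∧ 3 * n3max T u2 ≤ 2 * n := by
        refine ⟨hdegu2, ?_, ?_⟩ <;> rw [hheavy] <;> omega
      have := hmax u2 hW
      rw [hheavy, h3eq] at this
      omega


end Stmt9Aux

/-- Let `T` be a cubic tree with `n = 2^m` leaves, `m ≥ 3`. The set `W`
of internal nodes `v` with `n/2 ≤ n_{e_3(v),v} ≤ 2n/3` is nonempty, and any `v* ∈ W`
maximizing `n_{e_3(v),v}` over `W` satisfies `n/6 < n_{e_2(v*),v*} < n/3`. -/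
theorem stmt9 {V : Type} [Fintype V] (T : SimpleGraph V) (m : ℕ) (hm : 3 ≤ m)
    (hT : T.IsTree) (hcubic : IsCubic T) (hleaves : (leaves T).ncard = 2 ^ m) :
    {v : V | deg T v = 3 ∧ 2 ^ m ≤ 2 * n3max T v ∧ 3 * n3max T v ≤ 2 * 2 ^ m}.Nonempty ∧
    ∀ v : V,
      (deg T v = 3 ∧ 2 ^ m ≤ 2 * n3max T v ∧ 3 * n3max T v ≤ 2 * 2 ^ m) →
      (∀ w : V, (deg T w = 3 ∧ 2 ^ m ≤ 2 * n3max T w ∧ 3 * n3max T w ≤ 2 * 2 ^ m) →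
        n3max T w ≤ n3max T v) →
      2 ^ m < 6 * n2mid T v ∧ 3 * n2mid T v < 2 ^ m := by
  exact Stmt9Aux.stmt9_main T m hm hT hcubic hleaves
end

section
/- For every integer m ≥ 2 and all integers i, j with 0 ≤ i ≤ α^(m) − 2^{m−1} and 0 ≤ j ≤ α^(m) − 2^{m−1}, the statement P^(m)(i,j) holds; that is, for every l ∈ {1,…,m}, w_l([α^(m)−i, α^(m)−1]) + w_l([β^(m)−j, β^(m)−1]) ≥ w_l([1, i+j]). -/
open Module

/-- `α(m)`: the largest integer not exceeding `(2/3)·2^m`. -/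
def alph (m : ℕ) : ℕ := 2 ^ (m + 1) / 3

/-- `β(m)`: the largest integer not exceeding `(1/3)·2^m`. -/
def bet (m : ℕ) : ℕ := 2 ^ m / 3

/-- `wt x`: the number of ones in the binary representation of `x`. -/
def wtN (x : ℕ) : ℕ := (Nat.digits 2 x).count 1

/-- `w_l(S)`: the number of elements of `S` of binary weight at least `l`. -/
def wcount (l : ℕ) (S : Finset ℕ) : ℕ := (S.filter fun x => l ≤ wtN x).card

/-- The statement `P^(m)(i,j)`: for every `l ∈ {1,…,m}`,
`w_l([α−i, α−1]) + w_l([β−j, β−1]) ≥ w_l([1, i+j])`. -/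
def Pm (m i j : ℕ) : Prop :=
  ∀ l, 1 ≤ l → l ≤ m →
    wcount l (Finset.Icc (alph m - i) (alph m - 1)) +
      wcount l (Finset.Icc (bet m - j) (bet m - 1)) ≥
      wcount l (Finset.Icc 1 (i + j))

section Aux

open Finset

/-! ### Binary weight lemmas -/

lemma wtN_zero : wtN 0 = 0 := by simp [wtN]

lemma wtN_bit (n : ℕ) (h : n ≠ 0) : wtN n = n % 2 + wtN (n / 2) := by
  unfold wtN
  rw [Nat.digits_def' (by norm_num : 1 < 2) (Nat.pos_of_ne_zero h)]
  rcases Nat.mod_two_eq_zero_or_one n with h2 | h2 <;> simp [h2, List.count_cons] <;> omega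

lemma wtN_two_mul (q : ℕ) : wtN (2 * q) = wtN q := by
  rcases Nat.eq_zero_or_pos q with rfl | hq
  · simp
  · rw [wtN_bit (2 * q) (by omega)]
    have h1 : 2 * q % 2 = 0 := by omega
    have h2 : 2 * q / 2 = q := by omega
    rw [h1, h2]; omega

lemma wtN_two_mul_add_one (q : ℕ) : wtN (2 * q + 1) = wtN q + 1 := by
  rw [wtN_bit (2 * q + 1) (by omega)]
  have h1 : (2 * q + 1) % 2 = 1 := by omega
  have h2 : (2 * q + 1) / 2 = q := by omega
  rw [h1, h2]; omega

lemma one_le_wtN (x : ℕ) (hx : 1 ≤ x) : 1 ≤ wtN x := by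
  induction x using Nat.strong_induction_on with
  | _ x ih =>
    rcases Nat.even_or_odd x with ⟨q, hq⟩ | ⟨q, hq⟩
    · have hx2 : x = 2 * q := by omega
      subst hx2
      rw [wtN_two_mul]
      exact ih q (by omega) (by omega)
    · have hx2 : x = 2 * q + 1 := by omega
      subst hx2
      rw [wtN_two_mul_add_one]; omega

lemma wtN_le (k : ℕ) : ∀ x, x < 2 ^ k → wtN x ≤ k := by
  induction k with
  | zero => intro x hx; interval_cases x; simp [wtN_zero]
  | succ k ih =>
    intro x hx
    rcases Nat.eq_zero_or_pos x with rfl | hpos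
    · simp [wtN_zero]
    rw [wtN_bit x (by omega)]
    have := ih (x / 2) (by rw [pow_succ] at hx; omega)
    omega

/-! ### `wcount` lemmas -/

lemma wcount_empty (l : ℕ) : wcount l ∅ = 0 := by simp [wcount]

lemma wcount_Icc_eq_zero (l a b : ℕ) (h : b < a) : wcount l (Icc a b) = 0 := by
  rw [Finset.Icc_eq_empty (by omega)]; exact wcount_empty l

lemma wcount_zero_of (l : ℕ) (S : Finset ℕ) (h : ∀ x ∈ S, wtN x < l) :
    wcount l S = 0 := by
  unfold wcount
  rw [Finset.filter_false_of_mem (fun x hx => by have := h x hx; omega)]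
  simp

lemma wcount_one_Icc (a b : ℕ) (ha : 1 ≤ a) : wcount 1 (Icc a b) = b + 1 - a := by
  unfold wcount
  rw [Finset.filter_true_of_mem, Nat.card_Icc]
  intro x hx
  rw [Finset.mem_Icc] at hx
  exact one_le_wtN x (by omega)

lemma wcount_Icc_succ (l k : ℕ) :
    wcount l (Icc 1 (k + 1)) =
      wcount l (Icc 1 k) + if l ≤ wtN (k + 1) then 1 else 0 := by
  have h : Icc 1 (k + 1) = insert (k + 1) (Icc 1 k) := by
    ext x; simp only [Finset.mem_Icc, Finset.mem_insert]; omega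
  unfold wcount
  rw [h, Finset.filter_insert]
  split_ifs with hw
  · rw [Finset.card_insert_of_notMem]
    intro hmem
    rw [Finset.mem_filter, Finset.mem_Icc] at hmem
    omega
  · omega

lemma wcount_Icc_zero (l k : ℕ) (hl : 1 ≤ l) :
    wcount l (Icc 0 k) = wcount l (Icc 1 k) := by
  unfold wcount
  apply congrArg Finset.card
  ext x
  simp only [Finset.mem_filter, Finset.mem_Icc]
  constructor
  · rintro ⟨⟨-, h2⟩, h3⟩
    refine ⟨⟨?_, h2⟩, h3⟩
    by_contra hx
    have hx0 : x = 0 := by omega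
    rw [hx0, wtN_zero] at h3; omega
  · rintro ⟨⟨h1, h2⟩, h3⟩; exact ⟨⟨by omega, h2⟩, h3⟩

/-- The key parity-splitting identity: elements of weight `≥ l+1` in an interval split
into odd elements (whose halves have weight `≥ l`) and even elements. -/
lemma wcount_split (l a b : ℕ) (ha : 1 ≤ a) (hl : 1 ≤ l) :
    wcount (l + 1) (Icc a b) =
      wcount l (Icc (a / 2) ((b - 1) / 2)) + wcount (l + 1) (Icc ((a + 1) / 2) (b / 2)) := by
  unfold wcount
  rw [← Finset.card_filter_add_card_filter_not
      (p := fun x => x % 2 = 1) (s := (Icc a b).filter fun x => l + 1 ≤ wtN x)]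
  congr 1
  · rw [Finset.filter_filter]
    have himg : Finset.filter (fun x => l + 1 ≤ wtN x ∧ x % 2 = 1) (Icc a b)
        = ((Icc (a / 2) ((b - 1) / 2)).filter fun q => l ≤ wtN q).image (fun q => 2 * q + 1) := by
      ext x
      simp only [Finset.mem_filter, Finset.mem_Icc, Finset.mem_image]
      constructor
      · rintro ⟨⟨hax, hxb⟩, hw, hpar⟩
        obtain ⟨q, rfl⟩ : ∃ q, x = 2 * q + 1 := ⟨x / 2, by omega⟩
        rw [wtN_two_mul_add_one] at hw
        exact ⟨q, ⟨⟨by omega, by omega⟩, by omega⟩, rfl⟩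
      · rintro ⟨q, ⟨⟨h1, h2⟩, hw⟩, rfl⟩
        have hq1 : 1 ≤ q := by
          rcases Nat.eq_zero_or_pos q with rfl | h
          · rw [wtN_zero] at hw; omega
          · exact h
        rw [wtN_two_mul_add_one]
        refine ⟨⟨by omega, by omega⟩, by omega, by omega⟩
    rw [himg, Finset.card_image_of_injective _ (fun x y hxy => by omega)]
  · rw [Finset.filter_filter]
    have himg : Finset.filter (fun x => l + 1 ≤ wtN x ∧ ¬ x % 2 = 1) (Icc a b)
        = ((Icc ((a + 1) / 2) (b / 2)).filter fun q => l + 1 ≤ wtN q).image (fun q => 2 * q) := by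
      ext x
      simp only [Finset.mem_filter, Finset.mem_Icc, Finset.mem_image]
      constructor
      · rintro ⟨⟨hax, hxb⟩, hw, hpar⟩
        obtain ⟨q, rfl⟩ : ∃ q, x = 2 * q := ⟨x / 2, by omega⟩
        rw [wtN_two_mul] at hw
        exact ⟨q, ⟨⟨by omega, by omega⟩, hw⟩, rfl⟩
      · rintro ⟨q, ⟨⟨h1, h2⟩, hw⟩, rfl⟩
        have hq1 : 1 ≤ q := by omega
        rw [wtN_two_mul]
        refine ⟨⟨by omega, by omega⟩, hw, by omega⟩
    rw [himg, Finset.card_image_of_injective _ (fun x y hxy => by omega)]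

/-! ### Arithmetic facts about `alph` -/

lemma two_pow_mod_three (m : ℕ) : 2 ^ (m + 1) % 3 = 2 - m % 2 := by
  induction m with
  | zero => rfl
  | succ m ih =>
    have hp : 2 ^ (m + 1 + 1) = 2 * 2 ^ (m + 1) := by ring
    rw [hp, Nat.mul_mod, ih]
    rcases Nat.even_or_odd m with hme | hmo
    · have h1 : m % 2 = 0 := Nat.even_iff.mp hme
      have h2 : (m + 1) % 2 = 1 := by omega
      rw [h1, h2]
    · have h1 : m % 2 = 1 := Nat.odd_iff.mp hmo
      have h2 : (m + 1) % 2 = 0 := by omega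
      rw [h1, h2]

lemma alph_formula (m : ℕ) : 3 * alph m + (2 - m % 2) = 2 ^ (m + 1) := by
  have h1 := Nat.div_add_mod (2 ^ (m + 1)) 3
  have h2 := two_pow_mod_three m
  unfold alph
  omega

lemma alph_succ (m : ℕ) : alph (m + 1) = 2 * alph m + (m + 1) % 2 := by
  have h1 := alph_formula m
  have h2 := alph_formula (m + 1)
  rw [pow_succ] at h2
  omega

lemma alph_two_le (k : ℕ) (hk : 2 ≤ k) : 2 ≤ alph k := by
  have h1 := alph_formula k
  have h2 : (2:ℕ) ^ 3 ≤ 2 ^ (k + 1) := Nat.pow_le_pow_right (by norm_num) (by omega)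
  norm_num at h2
  omega

/-! ### Fuel-based weight, for `decide`-friendly base cases -/

def wtF : ℕ → ℕ → ℕ
  | _, 0 => 0
  | 0, _ + 1 => 0
  | f + 1, n + 1 => (n + 1) % 2 + wtF f ((n + 1) / 2)

lemma wtF_eq (f : ℕ) : ∀ n, n ≤ f → wtF f n = wtN n := by
  induction f with
  | zero => intro n hn; have : n = 0 := by omega
            subst this; rw [wtN_zero]; rfl
  | succ f ih =>
    intro n hn
    match n with
    | 0 => rw [wtN_zero]; rfl
    | n + 1 =>
      show (n + 1) % 2 + wtF f ((n + 1) / 2) = wtN (n + 1)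
      rw [ih ((n + 1) / 2) (by omega), wtN_bit (n + 1) (by omega)]

def wc' (l a b : ℕ) : ℕ := ((Icc a b).filter fun x => l ≤ wtF x x).card

lemma wc'_eq (l a b : ℕ) : wc' l a b = wcount l (Icc a b) := by
  unfold wc' wcount
  apply congrArg Finset.card
  apply Finset.filter_congr
  intro x _
  rw [wtF_eq x x le_rfl]

lemma key4' : ∀ l < 3, ∀ i < 4, ∀ j < 4, ∀ cq < 2, ∀ cq' < 2, ∀ t ≤ i + j,
    wc' (l + 1) 1 t ≤
      wc' (l + 1) (9 + cq + 1 - i) (9 + cq) + wc' (l + 1) (4 + cq' + 1 - j) (4 + cq') := by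
  decide

lemma key4 : ∀ l < 3, ∀ i < 4, ∀ j < 4, ∀ cq < 2, ∀ cq' < 2, ∀ t ≤ i + j,
    wcount (l + 1) (Icc 1 t) ≤
      wcount (l + 1) (Icc (9 + cq + 1 - i) (9 + cq)) +
      wcount (l + 1) (Icc (4 + cq' + 1 - j) (4 + cq')) := by
  intro l hl i hi j hj cq hcq cq' hcq' t ht
  have h := key4' l hl i hi j hj cq hcq cq' hcq' t ht
  rwa [wc'_eq, wc'_eq, wc'_eq] at h

lemma key3' : ∀ l < 3, ∀ i < 2, ∀ j < 2,
    wc' (l + 1) 1 (i + j) ≤ wc' (l + 1) (5 - i) 4 + wc' (l + 1) (2 - j) 1 := by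
  decide

lemma key3 : ∀ l < 3, ∀ i < 2, ∀ j < 2,
    wcount (l + 1) (Icc 1 (i + j)) ≤
      wcount (l + 1) (Icc (5 - i) 4) + wcount (l + 1) (Icc (2 - j) 1) := by
  intro l hl i hi j hj
  have h := key3' l hl i hi j hj
  rwa [wc'_eq, wc'_eq, wc'_eq] at h

lemma Icc_norm (p q : ℕ) : Icc p q = Icc (q + 1 - (q + 1 - p)) q := by
  by_cases hpq : p ≤ q + 1
  · congr 1; omega
  · rw [Finset.Icc_eq_empty (by omega), Finset.Icc_eq_empty (by omega)]

/-! ### The master inequality, proved by induction on `m` with parity splitting -/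

set_option maxHeartbeats 1600000 in
lemma master (m : ℕ) (hm : 4 ≤ m) :
    ∀ p q p' q' t l : ℕ, 1 ≤ l → 1 ≤ p → 1 ≤ p' →
      alph m - 1 ≤ q → q ≤ alph m →
      alph (m - 1) - 1 ≤ q' → q' ≤ alph (m - 1) →
      q + 1 - p ≤ alph (m - 2) + 1 → q' + 1 - p' ≤ alph (m - 2) + 1 →
      t ≤ (q + 1 - p) + (q' + 1 - p') →
      wcount l (Icc 1 t) ≤ wcount l (Icc p q) + wcount l (Icc p' q') := by
  induction m, hm using Nat.le_induction with
  | base =>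
    intro p q p' q' t l hl hp hp' hq1 hq2 hq1' hq2' hsz hsz' ht
    have ha4 : alph 4 = 10 := by decide
    have ha3 : alph 3 = 5 := by decide
    have ha2 : alph 2 = 2 := by decide
    rw [show (4:ℕ) - 1 = 3 from rfl, ha3] at hq1' hq2'
    rw [show (4:ℕ) - 2 = 2 from rfl, ha2] at hsz hsz'
    rw [ha4] at hq1 hq2
    by_cases hl4 : 4 ≤ l
    · have h0 : wcount l (Icc 1 t) = 0 := by
        apply wcount_zero_of
        intro x hx
        rw [Finset.mem_Icc] at hx
        have : wtN x ≤ 3 := wtN_le 3 x (by omega)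
        omega
      omega
    · obtain ⟨l0, rfl⟩ : ∃ l0, l = l0 + 1 := ⟨l - 1, by omega⟩
      obtain ⟨cq, rfl⟩ : ∃ c, q = 9 + c := ⟨q - 9, by omega⟩
      obtain ⟨cq', rfl⟩ : ∃ c, q' = 4 + c := ⟨q' - 4, by omega⟩
      have hkey := key4 l0 (by omega) (9 + cq + 1 - p) (by omega) (4 + cq' + 1 - p')
        (by omega) cq (by omega) cq' (by omega) t (by omega)
      rw [Icc_norm p (9 + cq), Icc_norm p' (4 + cq')]
      exact hkey
  | succ n hn ih =>
    intro p q p' q' t l hl hp hp' hq1 hq2 hq1' hq2' hsz hsz' ht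
    have en1 : n + 1 - 1 = n := by omega
    have en2 : n + 1 - 2 = n - 1 := by omega
    rw [en1] at hq1' hq2'
    rw [en2] at hsz hsz'
    have hA : alph (n + 1) = 2 * alph n + (n + 1) % 2 := alph_succ n
    have hB : alph n = 2 * alph (n - 1) + n % 2 := by
      have h := alph_succ (n - 1)
      have e : n - 1 + 1 = n := by omega
      rwa [e] at h
    have hC : alph (n - 1) = 2 * alph (n - 2) + (n - 1) % 2 := by
      have h := alph_succ (n - 2)
      have e : n - 2 + 1 = n - 1 := by omega
      rwa [e] at h
    have hg2 : 2 ≤ alph (n - 2) := alph_two_le _ (by omega)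
    rcases Nat.lt_or_ge l 2 with hl2 | hl2
    · have hl1 : l = 1 := by omega
      subst hl1
      rw [wcount_one_Icc 1 t le_rfl, wcount_one_Icc p q hp, wcount_one_Icc p' q' hp']
      omega
    · obtain ⟨l0, rfl⟩ : ∃ l0, l = l0 + 1 := ⟨l - 1, by omega⟩
      have hl0 : 1 ≤ l0 := by omega
      rw [wcount_split l0 p q hp hl0, wcount_split l0 p' q' hp' hl0,
          wcount_split l0 1 t le_rfl hl0,
          show (1:ℕ) / 2 = 0 from rfl, show ((1:ℕ) + 1) / 2 = 1 from rfl]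
      rw [wcount_Icc_zero l0 ((t - 1) / 2) hl0]
      by_cases hcase : t / 2 ≤ (q / 2 + 1 - (p + 1) / 2) + (q' / 2 + 1 - (p' + 1) / 2)
      · have h1 := ih (p / 2) ((q - 1) / 2) (p' / 2) ((q' - 1) / 2) ((t - 1) / 2) l0
          hl0 (by omega) (by omega) (by omega) (by omega) (by omega) (by omega)
          (by omega) (by omega) (by omega)
        have h0 := ih ((p + 1) / 2) (q / 2) ((p' + 1) / 2) (q' / 2) (t / 2) (l0 + 1)
          (by omega) (by omega) (by omega) (by omega) (by omega) (by omega) (by omega)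
          (by omega) (by omega) (by omega)
        omega
      · have ha := wcount_Icc_succ l0 (t / 2 - 1)
        have hb := wcount_Icc_succ (l0 + 1) (t / 2 - 1)
        have e7 : t / 2 - 1 + 1 = t / 2 := by omega
        rw [e7] at ha hb
        have e5 : (t - 1) / 2 = t / 2 - 1 := by omega
        rw [e5]
        have h1 := ih (p / 2) ((q - 1) / 2) (p' / 2) ((q' - 1) / 2) (t / 2) l0
          hl0 (by omega) (by omega) (by omega) (by omega) (by omega) (by omega)
          (by omega) (by omega) (by omega)
        have h0 := ih ((p + 1) / 2) (q / 2) ((p' + 1) / 2) (q' / 2) (t / 2 - 1) (l0 + 1)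
          (by omega) (by omega) (by omega) (by omega) (by omega) (by omega) (by omega)
          (by omega) (by omega) (by omega)
        split_ifs at ha hb <;> omega

end Aux

/-- Proposition in Appendix B: `P^(m)(i,j)` holds for every `m ≥ 2`
and all `0 ≤ i, j ≤ α^(m) − 2^{m−1}`. -/
theorem stmt14 (m : ℕ) (hm : 2 ≤ m) (i j : ℕ)
    (hi : i ≤ alph m - 2 ^ (m - 1)) (hj : j ≤ alph m - 2 ^ (m - 1)) :
    Pm m i j := by
  rcases Nat.lt_or_ge m 4 with hm4 | hm4
  · interval_cases m
    · -- m = 2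
      have ha2 : alph 2 = 2 := by decide
      have hi0 : i = 0 := by rw [ha2] at hi; simpa using hi
      have hj0 : j = 0 := by rw [ha2] at hj; simpa using hj
      subst hi0; subst hj0
      intro l _ _
      rw [ge_iff_le, wcount_Icc_eq_zero l 1 (0 + 0) (by omega)]
      exact Nat.zero_le _
    · -- m = 3
      have ha3 : alph 3 = 5 := by decide
      have hb3 : bet 3 = 2 := by decide
      have hi1 : i ≤ 1 := by rw [ha3] at hi; simpa using hi
      have hj1 : j ≤ 1 := by rw [ha3] at hj; simpa using hj
      intro l hl1 hl3
      rw [ge_iff_le, ha3, hb3]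
      obtain ⟨l0, rfl⟩ : ∃ l0, l = l0 + 1 := ⟨l - 1, by omega⟩
      exact key3 l0 (by omega) i (by omega) j (by omega)
  · -- m ≥ 4
    have hf1 := alph_formula m
    have hf2 := alph_formula (m - 2)
    have hmod : (m - 2) % 2 = m % 2 := by omega
    have hpow : 2 ^ (m + 1) = 4 * 2 ^ (m - 1) := by
      have e : m + 1 = (m - 1) + 2 := by omega
      rw [e, pow_succ, pow_succ]; ring
    have hpow2 : 2 ^ (m - 2 + 1) = 2 ^ (m - 1) := by congr 1; omega
    rw [hpow2] at hf2
    have hg2 : 2 ≤ alph (m - 2) := alph_two_le _ (by omega)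
    have hkey : alph m = alph (m - 2) + 2 ^ (m - 1) := by omega
    have hi' : i ≤ alph (m - 2) := by omega
    have hj' : j ≤ alph (m - 2) := by omega
    have hB : alph m = 2 * alph (m - 1) + m % 2 := by
      have h := alph_succ (m - 1)
      have e : m - 1 + 1 = m := by omega
      rwa [e] at h
    have hC : alph (m - 1) = 2 * alph (m - 2) + (m - 1) % 2 := by
      have h := alph_succ (m - 2)
      have e : m - 2 + 1 = m - 1 := by omega
      rwa [e] at h
    have hbet : bet m = alph (m - 1) := by
      unfold bet alph
      congr 1
      omega
    intro l hl1 hlm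
    rw [ge_iff_le, hbet]
    exact master m hm4 (alph m - i) (alph m - 1) (alph (m - 1) - j) (alph (m - 1) - 1)
      (i + j) l hl1 (by omega) (by omega) (by omega) (by omega) (by omega) (by omega)
      (by omega) (by omega) (by omega)
end
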